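/- Let n ≥ 1 and let (A_1, …, A_{2n}) be a Clifford system on ℝ^m. Then for all x ∈ ℝ^m: ⟨∇u(x), ∇q(x)⟩ = 16 ‖x‖² u(x), where u(x) = Σ_{i=1}^n ⟨x,A_ix⟩² − Σ_{i=1}^n ⟨x,A_{n+i}x⟩² and q(x) = Σ_{i=1}^{2n} ⟨x,A_ix⟩². -/

import Mathlib

open RealInnerProductSpace

/-- The quadratic form `P(x) = ⟨x, A x⟩` associated to an `m × m` real matrix `A`. -/
noncomputable def quadForm {m : ℕ} (A : Matrix (Fin m) (Fin m) ℝ)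
    (x : EuclideanSpace ℝ (Fin m)) : ℝ :=
  ⟪x, Matrix.toEuclideanLin A x⟫

/-- A Clifford system on `ℝ^m`. -/
def IsCliffordSystem {m N : ℕ} (A : Fin N → Matrix (Fin m) (Fin m) ℝ) : Prop :=
  (∀ i, (A i).IsSymm) ∧
    ∀ i j, A i * A j + A j * A i
      = (if i = j then (2 : ℝ) else 0) • (1 : Matrix (Fin m) (Fin m) ℝ)

/-- For a Clifford system `(A_1, …, A_{2n})` on `ℝ^m`, the degree-4 polynomial
`u(x) = Σ_{i=1}^n ⟨x, A_i x⟩² − Σ_{i=1}^n ⟨x, A_{n+i} x⟩²`. -/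
noncomputable def cliffU {m n : ℕ} (A : Fin (n + n) → Matrix (Fin m) (Fin m) ℝ)
    (x : EuclideanSpace ℝ (Fin m)) : ℝ :=
  ∑ i : Fin n, (quadForm (A (Fin.castAdd n i)) x) ^ 2
    - ∑ i : Fin n, (quadForm (A (Fin.natAdd n i)) x) ^ 2

/-- For a Clifford system `(A_1, …, A_{2n})` on `ℝ^m`, the degree-4 polynomial
`q(x) = Σ_{i=1}^{2n} ⟨x, A_i x⟩² = ‖P(x)‖²`. -/
noncomputable def cliffQ {m n : ℕ} (A : Fin (n + n) → Matrix (Fin m) (Fin m) ℝ)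
    (x : EuclideanSpace ℝ (Fin m)) : ℝ :=
  ∑ i : Fin (n + n), (quadForm (A i) x) ^ 2

lemma isSymmetric_of_isSymm {A : Matrix (Fin m) (Fin m) ℝ} (h : A.IsSymm) :
    (Matrix.toEuclideanLin A).IsSymmetric := by
  rw [← Matrix.isHermitian_iff_isSymmetric]
  simpa [Matrix.IsHermitian] using h.eq

lemma hasGradientAt_quadForm_sq {A : Matrix (Fin m) (Fin m) ℝ} (h : A.IsSymm)
    (x : EuclideanSpace ℝ (Fin m)) :
    HasGradientAt (fun y => quadForm A y ^ 2)
      ((4 * quadForm A x) • Matrix.toEuclideanLin A x) x := by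
  have hS := isSymmetric_of_isSymm h
  set T := (Matrix.toEuclideanLin A).toContinuousLinearMap with hT
  have hTx : ∀ y, Matrix.toEuclideanLin A y = T y := fun _ => rfl
  have h1 : HasFDerivAt (fun y : EuclideanSpace ℝ (Fin m) => quadForm A y)
      ((fderivInnerCLM ℝ (x, T x)).comp ((ContinuousLinearMap.id ℝ _).prod T)) x := by
    exact (hasFDerivAt_id x).inner ℝ (T.hasFDerivAt)
  have h2 := h1.mul h1
  rw [hasGradientAt_iff_hasFDerivAt]
  have : (fun y => quadForm A y ^ 2) = fun y => quadForm A y * quadForm A y := by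
    ext y; ring
  rw [this]
  refine h2.congr_fderiv ?_
  ext v
  simp only [InnerProductSpace.toDual_apply_apply, ContinuousLinearMap.add_apply,
    ContinuousLinearMap.coe_smul', Pi.smul_apply, ContinuousLinearMap.coe_comp',
    Function.comp_apply, ContinuousLinearMap.prod_apply, ContinuousLinearMap.coe_id', id_eq,
    fderivInnerCLM_apply, smul_eq_mul, real_inner_smul_left]
  have hsym : ⟪x, T v⟫ = ⟪T x, v⟫ := (hS x v).symm
  rw [hsym, hTx]
  linear_combination (-2 * quadForm A x) * (real_inner_comm v (T x))

lemma toEuclideanLin_mul' (A B : Matrix (Fin m) (Fin m) ℝ) (x : EuclideanSpace ℝ (Fin m)) :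
    Matrix.toEuclideanLin (A * B) x = Matrix.toEuclideanLin A (Matrix.toEuclideanLin B x) := by
  simp [Matrix.toEuclideanLin_apply, Matrix.mulVec_mulVec]

lemma toEuclideanLin_one' (x : EuclideanSpace ℝ (Fin m)) :
    Matrix.toEuclideanLin (1 : Matrix (Fin m) (Fin m) ℝ) x = x := by
  simp [Matrix.toEuclideanLin_apply]

lemma inner_toEuclideanLin_clifford {N : ℕ} {A : Fin N → Matrix (Fin m) (Fin m) ℝ}
    (hA : IsCliffordSystem A) (i j : Fin N) (x : EuclideanSpace ℝ (Fin m)) :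
    ⟪Matrix.toEuclideanLin (A i) x, Matrix.toEuclideanLin (A j) x⟫
      = (if i = j then 1 else 0) * ‖x‖ ^ 2 := by
  have hSi := isSymmetric_of_isSymm (hA.1 i)
  have hSj := isSymmetric_of_isSymm (hA.1 j)
  have h2 : (2:ℝ) * ⟪Matrix.toEuclideanLin (A i) x, Matrix.toEuclideanLin (A j) x⟫
      = ⟪x, Matrix.toEuclideanLin (A i * A j + A j * A i) x⟫ := by
    rw [map_add, LinearMap.add_apply, inner_add_right, toEuclideanLin_mul', toEuclideanLin_mul',
      ← hSi x (Matrix.toEuclideanLin (A j) x), ← hSj x (Matrix.toEuclideanLin (A i) x),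
      real_inner_comm (Matrix.toEuclideanLin (A j) x) (Matrix.toEuclideanLin (A i) x)]
    ring
  rw [hA.2 i j, _root_.map_smul, LinearMap.smul_apply, real_inner_smul_right, toEuclideanLin_one',
    real_inner_self_eq_norm_sq] at h2
  split_ifs at h2 ⊢ <;> linarith

lemma hasGradientAt_sum' {F : Type*} [NormedAddCommGroup F] [InnerProductSpace ℝ F]
    [CompleteSpace F] {ι : Type*} (s : Finset ι) {f : ι → F → ℝ} {g : ι → F} {x : F}
    (h : ∀ i ∈ s, HasGradientAt (f i) (g i) x) :
    HasGradientAt (fun y => ∑ i ∈ s, f i y) (∑ i ∈ s, g i) x := by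
  rw [hasGradientAt_iff_hasFDerivAt, map_sum]
  exact HasFDerivAt.fun_sum fun i hi => (h i hi).hasFDerivAt

lemma hasGradientAt_sub' {F : Type*} [NormedAddCommGroup F] [InnerProductSpace ℝ F]
    [CompleteSpace F] {f g : F → ℝ} {a b : F} {x : F}
    (hf : HasGradientAt f a x) (hg : HasGradientAt g b x) :
    HasGradientAt (fun y => f y - g y) (a - b) x := by
  rw [hasGradientAt_iff_hasFDerivAt, map_sub]
  exact hf.hasFDerivAt.sub hg.hasFDerivAt

lemma inner_sum_smul' {N : ℕ} {A : Fin N → Matrix (Fin m) (Fin m) ℝ}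
    (hA : IsCliffordSystem A) (x : EuclideanSpace ℝ (Fin m))
    {ι : Type*} [Fintype ι] (e : ι → Fin N) (c : ι → ℝ) (d : Fin N → ℝ) :
    ⟪∑ i : ι, c i • Matrix.toEuclideanLin (A (e i)) x,
      ∑ j : Fin N, d j • Matrix.toEuclideanLin (A j) x⟫
      = (∑ i : ι, c i * d (e i)) * ‖x‖ ^ 2 := by
  rw [sum_inner, Finset.sum_mul]
  refine Finset.sum_congr rfl fun i _ => ?_
  rw [inner_sum]
  simp only [real_inner_smul_left, real_inner_smul_right,
    inner_toEuclideanLin_clifford hA, mul_ite, mul_one, mul_zero, ite_mul, zero_mul]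
  rw [Finset.sum_ite_eq]
  simp; ring

/-- For a Clifford system `(A_1, …, A_{2n})` on `ℝ^m` (`n ≥ 1`):
`⟨∇u(x), ∇q(x)⟩ = 16 ‖x‖² u(x)` for all `x ∈ ℝ^m`. -/
theorem grad_u_grad_q {m n : ℕ} (hn : 1 ≤ n)
    (A : Fin (n + n) → Matrix (Fin m) (Fin m) ℝ) (hA : IsCliffordSystem A) :
    ∀ x : EuclideanSpace ℝ (Fin m),
      ⟪gradient (cliffU A) x, gradient (cliffQ A) x⟫ = 16 * ‖x‖ ^ 2 * cliffU A x := by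
  intro x
  set P : Fin (n + n) → ℝ := fun i => quadForm (A i) x with hP
  set v : Fin (n + n) → EuclideanSpace ℝ (Fin m) := fun i => Matrix.toEuclideanLin (A i) x
    with hv
  have hQ : HasGradientAt (cliffQ A) (∑ j : Fin (n + n), (4 * P j) • v j) x :=
    hasGradientAt_sum' Finset.univ (fun i _ => hasGradientAt_quadForm_sq (hA.1 i) x)
  have hU : HasGradientAt (cliffU A)
      ((∑ i : Fin n, (4 * P (Fin.castAdd n i)) • v (Fin.castAdd n i))
        - ∑ i : Fin n, (4 * P (Fin.natAdd n i)) • v (Fin.natAdd n i)) x :=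
    hasGradientAt_sub'
      (hasGradientAt_sum' Finset.univ (fun i _ => hasGradientAt_quadForm_sq (hA.1 _) x))
      (hasGradientAt_sum' Finset.univ (fun i _ => hasGradientAt_quadForm_sq (hA.1 _) x))
  rw [hU.gradient, hQ.gradient, inner_sub_left,
    inner_sum_smul' hA x (Fin.castAdd n) (fun i => 4 * P (Fin.castAdd n i)) (fun j => 4 * P j),
    inner_sum_smul' hA x (Fin.natAdd n) (fun i => 4 * P (Fin.natAdd n i)) (fun j => 4 * P j)]
  have e1 : ∑ i : Fin n, (4 * P (Fin.castAdd n i)) * (4 * P (Fin.castAdd n i))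
      = 16 * ∑ i : Fin n, P (Fin.castAdd n i) ^ 2 := by
    rw [Finset.mul_sum]; exact Finset.sum_congr rfl fun i _ => by ring
  have e2 : ∑ i : Fin n, (4 * P (Fin.natAdd n i)) * (4 * P (Fin.natAdd n i))
      = 16 * ∑ i : Fin n, P (Fin.natAdd n i) ^ 2 := by
    rw [Finset.mul_sum]; exact Finset.sum_congr rfl fun i _ => by ring
  rw [e1, e2]
  simp only [cliffU, hP]
  ring
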